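/- Let n ≥ 2 and let σ : ℤ → ℤ be an n-periodic bijection whose length ℓ(σ) = Σ_{1 ≤ i < j ≤ n} |⌊(σ(j)-σ(i))/n⌋| is minimal among all n-periodic bijections agreeing with σ mod n. Then max{σ(i) : 1 ≤ i ≤ n} − min{σ(i) : 1 ≤ i ≤ n} < 2n. -/

import Mathlib

/-- Shi length statistic of an n-periodic bijection. -/
noncomputable def affineLength (n : ℤ) (σ : ℤ → ℤ) : ℤ :=
  ∑ i ∈ Finset.Icc (1 : ℤ) n, ∑ j ∈ Finset.Icc (1 : ℤ) n,
    if i < j then |Int.fdiv (σ j - σ i) n| else 0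

/-- the summand of `affineLength`. -/
private def Fl (n : ℤ) (g : ℤ → ℤ) (i j : ℤ) : ℤ :=
  if i < j then |Int.fdiv (g j - g i) n| else 0

private lemma Fl_eq {n : ℤ} (hn : 0 ≤ n) (g : ℤ → ℤ) (i j : ℤ) :
    Fl n g i j = if i < j then |(g j - g i) / n| else 0 := by
  unfold Fl; rw [Int.fdiv_eq_ediv_of_nonneg _ hn]

private lemma affineLength_eq (n : ℤ) (g : ℤ → ℤ) :
    affineLength n g = ∑ i ∈ Finset.Icc (1 : ℤ) n, ∑ j ∈ Finset.Icc (1 : ℤ) n, Fl n g i j :=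
  rfl

private lemma shiftA {n d : ℤ} (hn : 0 < n) (hd : d < 0) :
    |(d + n) / n| = |d / n| - 1 := by
  have h1 : (d + n) / n = d / n + 1 := by
    have := Int.add_mul_ediv_right d 1 hn.ne'
    simpa using this
  have hq : d / n < 0 := Int.ediv_neg_of_neg_of_pos hd hn
  rw [h1, abs_of_nonpos (by omega), abs_of_neg hq]; ring

private lemma shiftB1 {n d : ℤ} (hn : 0 < n) (hd : n ≤ d) :
    |(d - n) / n| = |d / n| - 1 := by
  have h1 : (d - n) / n = d / n - 1 := by
    have := Int.add_mul_ediv_right d (-1) hn.ne'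
    rw [show d + -1 * n = d - n by ring] at this
    omega
  have hq : 1 ≤ d / n := (Int.le_ediv_iff_mul_le hn).2 (by linarith)
  rw [h1, abs_of_nonneg (by omega), abs_of_nonneg (by omega)]

private lemma shiftB2 {n d : ℤ} (hn : 0 < n) (h0 : 0 ≤ d) (hd : d < n) :
    |(d - n) / n| = |d / n| + 1 := by
  have h1 : (d - n) / n = d / n - 1 := by
    have := Int.add_mul_ediv_right d (-1) hn.ne'
    rw [show d + -1 * n = d - n by ring] at this
    omega
  have hq : d / n = 0 := Int.ediv_eq_zero_of_lt h0 hd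
  rw [h1, hq]; norm_num

private lemma shiftC {n d : ℤ} (hn : 0 < n) (hd : d ≤ -2 * n) :
    |(d + 2 * n) / n| = |d / n| - 2 := by
  have h1 : (d + 2 * n) / n = d / n + 2 := by
    have := Int.add_mul_ediv_right d 2 hn.ne'
    rw [show d + 2 * n = d + 2 * n by ring] at this
    omega
  have hq : d / n < -1 := (Int.ediv_lt_iff_lt_mul hn).2 (by linarith)
  rw [h1, abs_of_nonpos (by omega), abs_of_neg (by omega)]; ring

private lemma shiftC' {n d : ℤ} (hn : 0 < n) (hd : 2 * n ≤ d) :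
    |(d - 2 * n) / n| = |d / n| - 2 := by
  have h1 : (d - 2 * n) / n = d / n - 2 := by
    have := Int.add_mul_ediv_right d (-2) hn.ne'
    rw [show d + -2 * n = d - 2 * n by ring] at this
    omega
  have hq : 2 ≤ d / n := (Int.le_ediv_iff_mul_le hn).2 (by linarith)
  rw [h1, abs_of_nonneg (by omega), abs_of_nonneg (by omega)]

/-- For a minimal-length representative, max σ(i) − min σ(i) over the window
{1,…,n} is less than 2n. -/
theorem stmt_6 (n : ℤ) (hn : 2 ≤ n) (σ : ℤ → ℤ)
    (hbij : Function.Bijective σ) (hper : ∀ i : ℤ, σ (i + n) = σ i + n)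
    (hmin : ∀ σ' : ℤ → ℤ, Function.Bijective σ' → (∀ i : ℤ, σ' (i + n) = σ' i + n) →
      (∀ i : ℤ, σ' i ≡ σ i [ZMOD n]) → affineLength n σ ≤ affineLength n σ')
    (hne : (Finset.Icc (1 : ℤ) n).Nonempty) :
    (Finset.Icc (1 : ℤ) n).sup' hne σ - (Finset.Icc (1 : ℤ) n).inf' hne σ < 2 * n := by
  have hn0 : (0 : ℤ) < n := by omega
  by_contra hcon
  push_neg at hcon
  obtain ⟨i₀, hi₀s, hi₀⟩ := Finset.exists_mem_eq_sup' hne σ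
  obtain ⟨j₀, hj₀s, hj₀⟩ := Finset.exists_mem_eq_inf' hne σ
  rw [hi₀, hj₀] at hcon
  have hmax : ∀ k ∈ Finset.Icc (1 : ℤ) n, σ k ≤ σ i₀ := fun k hk => hi₀ ▸ Finset.le_sup' σ hk
  have hmn : ∀ k ∈ Finset.Icc (1 : ℤ) n, σ j₀ ≤ σ k := fun k hk => hj₀ ▸ Finset.inf'_le σ hk
  have hij : i₀ ≠ j₀ := by rintro rfl; omega
  have hinj := hbij.injective
  -- extended periodicity
  have hper' : ∀ t k : ℤ, σ (k + t * n) = σ k + t * n := by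
    intro t
    induction t using Int.induction_on with
    | zero => simp
    | succ m ih =>
      intro k
      rw [show k + ((m : ℤ) + 1) * n = (k + (m : ℤ) * n) + n by ring, hper, ih]; ring
    | pred m ih =>
      intro k
      have h2 := hper (k + (-(m : ℤ) - 1) * n)
      rw [show (k + (-(m : ℤ) - 1) * n) + n = k + (-(m : ℤ)) * n by ring, ih] at h2
      linear_combination -h2
  -- no two distinct elements of the window are congruent
  have hsmall : ∀ a b : ℤ, a ∈ Finset.Icc (1 : ℤ) n → b ∈ Finset.Icc (1 : ℤ) n → a ≠ b →
      ¬ n ∣ (a - b) := by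
    rintro a b ha hb hab ⟨t, ht⟩
    rw [Finset.mem_Icc] at ha hb
    rcases lt_trichotomy t 0 with h | h | h
    · have : n * t ≤ n * (-1) := by
        apply mul_le_mul_of_nonneg_left (by omega) hn0.le
      have hnt : n * t ≤ -n := by linarith
      omega
    · subst h; omega
    · have : n * 1 ≤ n * t := by
        apply mul_le_mul_of_nonneg_left (by omega) hn0.le
      have hnt : n ≤ n * t := by linarith
      omega
  have hsep : ¬ n ∣ (i₀ - j₀) := hsmall i₀ j₀ hi₀s hj₀s hij
  -- transfer congruence through σ
  have hPiff : ∀ c k : ℤ, n ∣ (k - c) ↔ n ∣ (σ k - σ c) := by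
    intro c k
    constructor
    · rintro ⟨t, ht⟩
      have hk : k = c + t * n := by linear_combination ht
      rw [hk, hper']
      exact ⟨t, by ring⟩
    · rintro ⟨t, ht⟩
      have h1 : σ k = σ (c + t * n) := by rw [hper']; linear_combination ht
      have h2 := hinj h1
      exact ⟨t, by linear_combination h2⟩
  have hsepσ : ¬ n ∣ (σ i₀ - σ j₀) := fun h => hsep ((hPiff j₀ i₀).2 h)
  -- the modified permutation
  set σ' : ℤ → ℤ := fun k => if n ∣ (k - i₀) then σ k - n else if n ∣ (k - j₀) then σ k + n
    else σ k with hσ'def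
  have hshift : ∀ c k : ℤ, n ∣ (k + n - c) ↔ n ∣ (k - c) := by
    intro c k
    constructor
    · rintro ⟨t, ht⟩; exact ⟨t - 1, by linear_combination ht⟩
    · rintro ⟨t, ht⟩; exact ⟨t + 1, by linear_combination ht⟩
  have hσ'i₀ : σ' i₀ = σ i₀ - n := by simp [hσ'def]
  have hσ'j₀ : σ' j₀ = σ j₀ + n := by
    have h1 : ¬ n ∣ (j₀ - i₀) := fun h => hsep (dvd_sub_comm.1 h)
    have h2 : n ∣ (j₀ - j₀) := by simp
    simp [hσ'def, h1, h2]
  have hσ'k : ∀ k, ¬ n ∣ (k - i₀) → ¬ n ∣ (k - j₀) → σ' k = σ k := by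
    intro k h1 h2; simp [hσ'def, h1, h2]
  -- periodicity of σ'
  have hper2 : ∀ i : ℤ, σ' (i + n) = σ' i + n := by
    intro i
    by_cases h1 : n ∣ (i - i₀)
    · have h1' : n ∣ (i + n - i₀) := (hshift i₀ i).2 h1
      simp [hσ'def, h1, h1', hper i]
    · have h1' : ¬ n ∣ (i + n - i₀) := fun h => h1 ((hshift i₀ i).1 h)
      by_cases h2 : n ∣ (i - j₀)
      · have h2' : n ∣ (i + n - j₀) := (hshift j₀ i).2 h2
        simp [hσ'def, h1, h1', h2, h2', hper i]
      · have h2' : ¬ n ∣ (i + n - j₀) := fun h => h2 ((hshift j₀ i).1 h)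
        simp [hσ'def, h1, h1', h2, h2', hper i]
  -- congruence of σ'
  have hmod : ∀ i : ℤ, σ' i ≡ σ i [ZMOD n] := by
    intro i
    rw [Int.modEq_iff_dvd]
    rw [hσ'def]
    by_cases h1 : n ∣ (i - i₀)
    · simp [h1]
    · by_cases h2 : n ∣ (i - j₀) <;> simp [h1, h2]
  -- bijectivity of σ'
  set τ : ℤ → ℤ := fun m => if n ∣ (m - σ i₀) then m - n else if n ∣ (m - σ j₀) then m + n
    else m with hτdef
  set τ' : ℤ → ℤ := fun m => if n ∣ (m - σ i₀) then m + n else if n ∣ (m - σ j₀) then m - n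
    else m with hτ'def
  have hshiftd : ∀ c k : ℤ, n ∣ (k - n - c) ↔ n ∣ (k - c) := by
    intro c k
    constructor
    · rintro ⟨t, ht⟩; exact ⟨t + 1, by linear_combination ht⟩
    · rintro ⟨t, ht⟩; exact ⟨t - 1, by linear_combination ht⟩
  have hexcl : ∀ m : ℤ, n ∣ (m - σ i₀) → n ∣ (m - σ j₀) → False := by
    intro m h1 h2
    exact hsepσ (by simpa using dvd_sub h2 h1)
  have hτbij : Function.Bijective τ := by
    apply Function.bijective_iff_has_inverse.2
    refine ⟨τ', ?_, ?_⟩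
    · intro m
      by_cases h1 : n ∣ (m - σ i₀)
      · have h1' : n ∣ (m - n - σ i₀) := (hshiftd _ _).2 h1
        simp [hτdef, hτ'def, h1, h1']
      · by_cases h2 : n ∣ (m - σ j₀)
        · have h2' : n ∣ (m + n - σ j₀) := (hshift _ _).2 h2
          have h1' : ¬ n ∣ (m + n - σ i₀) := fun h => h1 ((hshift _ _).1 h)
          simp [hτdef, hτ'def, h1, h2, h1', h2']
        · simp [hτdef, hτ'def, h1, h2]
    · intro m
      by_cases h1 : n ∣ (m - σ i₀)
      · have h1' : n ∣ (m + n - σ i₀) := (hshift _ _).2 h1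
        simp [hτdef, hτ'def, h1, h1']
      · by_cases h2 : n ∣ (m - σ j₀)
        · have h2' : n ∣ (m - n - σ j₀) := (hshiftd _ _).2 h2
          have h1' : ¬ n ∣ (m - n - σ i₀) := fun h => h1 ((hshiftd _ _).1 h)
          simp [hτdef, hτ'def, h1, h2, h1', h2']
        · simp [hτdef, hτ'def, h1, h2]
  have hcomp : σ' = τ ∘ σ := by
    funext k
    simp only [Function.comp_apply]
    by_cases h1 : n ∣ (k - i₀)
    · simp [hσ'def, hτdef, h1, (hPiff i₀ k).1 h1]
    · have h1' : ¬ n ∣ (σ k - σ i₀) := fun h => h1 ((hPiff i₀ k).2 h)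
      by_cases h2 : n ∣ (k - j₀)
      · simp [hσ'def, hτdef, h1, h1', h2, (hPiff j₀ k).1 h2]
      · have h2' : ¬ n ∣ (σ k - σ j₀) := fun h => h2 ((hPiff j₀ k).2 h)
        simp [hσ'def, hτdef, h1, h1', h2, h2']
  have hbij' : Function.Bijective σ' := by
    rw [hcomp]; exact hτbij.comp hbij
  -- now the length comparison
  have hle := hmin σ' hbij' hper2 hmod
  -- setup for the decomposition of the double sum
  set s : Finset ℤ := Finset.Icc (1 : ℤ) n with hsdef
  set t : Finset ℤ := (s.erase i₀).erase j₀ with htdef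
  have hj₀e : j₀ ∈ s.erase i₀ := Finset.mem_erase.2 ⟨fun h => hij h.symm, hj₀s⟩
  have hins : s = insert i₀ (insert j₀ t) := by
    rw [htdef, Finset.insert_erase hj₀e, Finset.insert_erase hi₀s]
  have hi₀ni : i₀ ∉ insert j₀ t := by
    rw [htdef, Finset.insert_erase hj₀e]; exact Finset.notMem_erase _ _
  have hj₀nt : j₀ ∉ t := Finset.notMem_erase _ _
  have hdec : ∀ h : ℤ → ℤ → ℤ, (∑ i ∈ s, ∑ j ∈ s, h i j) =
      h i₀ i₀ + h i₀ j₀ + (∑ j ∈ t, h i₀ j) + h j₀ i₀ + h j₀ j₀ + (∑ j ∈ t, h j₀ j) +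
      ((∑ i ∈ t, h i i₀) + (∑ i ∈ t, h i j₀) + ∑ i ∈ t, ∑ j ∈ t, h i j) := by
    intro h
    conv_lhs => rw [hins]
    simp only [Finset.sum_insert hi₀ni, Finset.sum_insert hj₀nt, Finset.sum_add_distrib]
    ring
  have hmemt : ∀ k ∈ t, k ∈ s ∧ k ≠ i₀ ∧ k ≠ j₀ := by
    intro k hk
    rw [htdef, Finset.mem_erase, Finset.mem_erase] at hk
    exact ⟨hk.2.2, hk.2.1, hk.1⟩
  have hσ't : ∀ k ∈ t, σ' k = σ k := by
    intro k hk
    obtain ⟨hks, hki, hkj⟩ := hmemt k hk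
    exact hσ'k k (hsmall k i₀ hks hi₀s hki) (hsmall k j₀ hks hj₀s hkj)
  -- key per-element inequality
  have keyk : ∀ k ∈ t, Fl n σ' i₀ k + Fl n σ' j₀ k + (Fl n σ' k i₀ + Fl n σ' k j₀) ≤
      Fl n σ i₀ k + Fl n σ j₀ k + (Fl n σ k i₀ + Fl n σ k j₀) := by
    intro k hk
    obtain ⟨hks, hki, hkj⟩ := hmemt k hk
    have hxk : σ' k = σ k := hσ't k hk
    have hkM : σ k ≤ σ i₀ := hmax k hks
    have hkm : σ j₀ ≤ σ k := hmn k hks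
    have hkM' : σ k ≠ σ i₀ := fun h => hki (hinj h)
    have hkm' : σ k ≠ σ j₀ := fun h => hkj (hinj h)
    simp only [Fl_eq hn0.le, hxk, hσ'i₀, hσ'j₀]
    rcases lt_or_gt_of_ne hki with hki1 | hki1 <;> rcases lt_or_gt_of_ne hkj with hkj1 | hkj1
    · -- k < i₀, k < j₀
      rw [if_pos hki1, if_pos hkj1, if_pos hki1, if_pos hkj1,
        if_neg (by omega : ¬ i₀ < k), if_neg (by omega : ¬ j₀ < k),
        if_neg (by omega : ¬ i₀ < k), if_neg (by omega : ¬ j₀ < k)]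
      have hA : |(σ j₀ + n - σ k) / n| = |(σ j₀ - σ k) / n| - 1 := by
        rw [show σ j₀ + n - σ k = (σ j₀ - σ k) + n by ring]
        exact shiftA hn0 (by omega)
      by_cases hc : n ≤ σ i₀ - σ k
      · have hB : |(σ i₀ - n - σ k) / n| = |(σ i₀ - σ k) / n| - 1 := by
          rw [show σ i₀ - n - σ k = (σ i₀ - σ k) - n by ring]
          exact shiftB1 hn0 hc
        rw [hA, hB]; linarith
      · have hB : |(σ i₀ - n - σ k) / n| = |(σ i₀ - σ k) / n| + 1 := by
          rw [show σ i₀ - n - σ k = (σ i₀ - σ k) - n by ring]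
          exact shiftB2 hn0 (by omega) (by omega)
        rw [hA, hB]; linarith
    · -- j₀ < k < i₀ : the conflict case
      rw [if_pos hki1, if_pos hkj1, if_pos hki1, if_pos hkj1,
        if_neg (by omega : ¬ i₀ < k), if_neg (by omega : ¬ k < j₀),
        if_neg (by omega : ¬ i₀ < k), if_neg (by omega : ¬ k < j₀)]
      by_cases hc1 : n ≤ σ i₀ - σ k
      · have hB : |(σ i₀ - n - σ k) / n| = |(σ i₀ - σ k) / n| - 1 := by
          rw [show σ i₀ - n - σ k = (σ i₀ - σ k) - n by ring]
          exact shiftB1 hn0 hc1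
        by_cases hc2 : n ≤ σ k - σ j₀
        · have hB2 : |(σ k - (σ j₀ + n)) / n| = |(σ k - σ j₀) / n| - 1 := by
            rw [show σ k - (σ j₀ + n) = (σ k - σ j₀) - n by ring]
            exact shiftB1 hn0 hc2
          rw [hB, hB2]; linarith
        · have hB2 : |(σ k - (σ j₀ + n)) / n| = |(σ k - σ j₀) / n| + 1 := by
            rw [show σ k - (σ j₀ + n) = (σ k - σ j₀) - n by ring]
            exact shiftB2 hn0 (by omega) (by omega)
          rw [hB, hB2]; linarith
      · by_cases hc2 : n ≤ σ k - σ j₀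
        · have hB : |(σ i₀ - n - σ k) / n| = |(σ i₀ - σ k) / n| + 1 := by
            rw [show σ i₀ - n - σ k = (σ i₀ - σ k) - n by ring]
            exact shiftB2 hn0 (by omega) (by omega)
          have hB2 : |(σ k - (σ j₀ + n)) / n| = |(σ k - σ j₀) / n| - 1 := by
            rw [show σ k - (σ j₀ + n) = (σ k - σ j₀) - n by ring]
            exact shiftB1 hn0 hc2
          rw [hB, hB2]; linarith
        · -- both small: contradiction with 2n ≤ σ i₀ - σ j₀
          omega
    · -- i₀ < k, k < j₀
      rw [if_pos hki1, if_pos hkj1, if_pos hki1, if_pos hkj1,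
        if_neg (by omega : ¬ k < i₀), if_neg (by omega : ¬ j₀ < k),
        if_neg (by omega : ¬ k < i₀), if_neg (by omega : ¬ j₀ < k)]
      have hA1 : |(σ k - (σ i₀ - n)) / n| = |(σ k - σ i₀) / n| - 1 := by
        rw [show σ k - (σ i₀ - n) = (σ k - σ i₀) + n by ring]
        exact shiftA hn0 (by omega)
      have hA2 : |(σ j₀ + n - σ k) / n| = |(σ j₀ - σ k) / n| - 1 := by
        rw [show σ j₀ + n - σ k = (σ j₀ - σ k) + n by ring]
        exact shiftA hn0 (by omega)
      rw [hA1, hA2]; linarith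
    · -- i₀ < k, j₀ < k
      rw [if_pos hki1, if_pos hkj1, if_pos hki1, if_pos hkj1,
        if_neg (by omega : ¬ k < i₀), if_neg (by omega : ¬ k < j₀),
        if_neg (by omega : ¬ k < i₀), if_neg (by omega : ¬ k < j₀)]
      have hA1 : |(σ k - (σ i₀ - n)) / n| = |(σ k - σ i₀) / n| - 1 := by
        rw [show σ k - (σ i₀ - n) = (σ k - σ i₀) + n by ring]
        exact shiftA hn0 (by omega)
      by_cases hc2 : n ≤ σ k - σ j₀
      · have hB2 : |(σ k - (σ j₀ + n)) / n| = |(σ k - σ j₀) / n| - 1 := by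
          rw [show σ k - (σ j₀ + n) = (σ k - σ j₀) - n by ring]
          exact shiftB1 hn0 hc2
        rw [hA1, hB2]; linarith
      · have hB2 : |(σ k - (σ j₀ + n)) / n| = |(σ k - σ j₀) / n| + 1 := by
          rw [show σ k - (σ j₀ + n) = (σ k - σ j₀) - n by ring]
          exact shiftB2 hn0 (by omega) (by omega)
        rw [hA1, hB2]; linarith
  -- the cross pair drops by 2
  have keycross : Fl n σ' i₀ j₀ + Fl n σ' j₀ i₀ = Fl n σ i₀ j₀ + Fl n σ j₀ i₀ - 2 := by
    simp only [Fl_eq hn0.le, hσ'i₀, hσ'j₀]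
    rcases lt_or_gt_of_ne hij with h | h
    · rw [if_pos h, if_pos h, if_neg (by omega : ¬ j₀ < i₀), if_neg (by omega : ¬ j₀ < i₀)]
      have hC : |(σ j₀ + n - (σ i₀ - n)) / n| = |(σ j₀ - σ i₀) / n| - 2 := by
        rw [show σ j₀ + n - (σ i₀ - n) = (σ j₀ - σ i₀) + 2 * n by ring]
        exact shiftC hn0 (by omega)
      rw [hC]; ring
    · rw [if_pos h, if_pos h, if_neg (by omega : ¬ i₀ < j₀), if_neg (by omega : ¬ i₀ < j₀)]
      have hC : |(σ i₀ - n - (σ j₀ + n)) / n| = |(σ i₀ - σ j₀) / n| - 2 := by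
        rw [show σ i₀ - n - (σ j₀ + n) = (σ i₀ - σ j₀) - 2 * n by ring]
        exact shiftC' hn0 (by omega)
      rw [hC]; ring
  have hdiag : ∀ g : ℤ → ℤ, ∀ a : ℤ, Fl n g a a = 0 := by
    intro g a; simp [Fl]
  have htt : (∑ i ∈ t, ∑ j ∈ t, Fl n σ' i j) = ∑ i ∈ t, ∑ j ∈ t, Fl n σ i j := by
    apply Finset.sum_congr rfl
    intro i hi
    apply Finset.sum_congr rfl
    intro j hj
    rw [Fl, Fl, hσ't i hi, hσ't j hj]
  have hsum4 : (∑ j ∈ t, Fl n σ' i₀ j) + (∑ j ∈ t, Fl n σ' j₀ j) +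
      ((∑ i ∈ t, Fl n σ' i i₀) + (∑ i ∈ t, Fl n σ' i j₀)) ≤
      (∑ j ∈ t, Fl n σ i₀ j) + (∑ j ∈ t, Fl n σ j₀ j) +
      ((∑ i ∈ t, Fl n σ i i₀) + (∑ i ∈ t, Fl n σ i j₀)) := by
    have := Finset.sum_le_sum keyk
    simpa [Finset.sum_add_distrib] using this
  have main : affineLength n σ' ≤ affineLength n σ - 2 := by
    rw [affineLength_eq, affineLength_eq]
    rw [show Finset.Icc (1:ℤ) n = s from hsdef.symm ▸ rfl]
    rw [hdec (Fl n σ'), hdec (Fl n σ)]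
    have d1 := hdiag σ' i₀
    have d2 := hdiag σ' j₀
    have d3 := hdiag σ i₀
    have d4 := hdiag σ j₀
    linarith [keycross, htt, hsum4]
  omega
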